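/- arXiv:2308.00768 — 2 statements merged into one kernel-verified Lean document; each statement's English description precedes it below -/
import Mathlib

section
/- For every K ≥ 1, every U with 1 ≤ U ≤ K, and every n ≥ 1, there exists M : ℝ → ℝ such that for each α₁ > 0, Pr(K⁺ = U | K, n, α₁, α₂) tends to M α₁ as α₂ → 0⁺, and M α₁ tends to s(n, U)/Uⁿ as α₁ → ∞, where s(n, U) denotes the number of surjective functions from Fin n onto Fin U. In other words, for fixed n the iterated limit lim_{α₁→∞} lim_{α₂→0⁺} Pr(K⁺ = U | K, n, α₁, α₂) equals the proportion of surjective allocations s(n, U)/Uⁿ. -/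
open Filter Topology Finset

/-- Number of indices `i` with `z i = k`. -/
def nk {n K : ℕ} (z : Fin n → Fin K) (k : Fin K) : ℕ :=
  (Finset.univ.filter (fun i => z i = k)).card

/-- Number of occupied components (distinct values taken by `z`). -/
def Kplus {n K : ℕ} (z : Fin n → Fin K) : ℕ :=
  (Finset.univ.image z).card

/-- Marginal allocation probability under an asymmetric Dirichlet(α₁ on first U
coordinates, α₂ on the rest) prior on the mixture weights. -/
noncomputable def pz (K U n : ℕ) (α₁ α₂ : ℝ) (z : Fin n → Fin K) : ℝ :=
  (Real.Gamma ((U : ℝ) * α₁ + ((K : ℝ) - (U : ℝ)) * α₂) /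
      Real.Gamma ((U : ℝ) * α₁ + ((K : ℝ) - (U : ℝ)) * α₂ + (n : ℝ))) *
    ∏ k : Fin K,
      Real.Gamma ((if (k : ℕ) < U then α₁ else α₂) + (nk z k : ℝ)) /
        Real.Gamma (if (k : ℕ) < U then α₁ else α₂)

/-- Prior probability that the number of occupied components equals `u`. -/
noncomputable def prKplus (K U n : ℕ) (α₁ α₂ : ℝ) (u : ℕ) : ℝ :=
  ∑ z ∈ Finset.univ.filter (fun z : Fin n → Fin K => Kplus z = u),
    pz K U n α₁ α₂ z


/-- Number of surjective functions from `Fin n` onto `Fin U`. -/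
noncomputable def surjCount (n U : ℕ) : ℕ :=
  Nat.card {f : Fin n → Fin U // Function.Surjective f}

/-! ### Auxiliary lemmas -/

lemma div_div_cancel_aux (x y c : ℝ) (hc : c ≠ 0) : (x/c)/(y/c) = x/y := by
  rcases eq_or_ne y 0 with h | h
  · simp [h]
  · field_simp

lemma sum_nk {n K : ℕ} (z : Fin n → Fin K) : ∑ k : Fin K, nk z k = n := by
  unfold nk
  rw [← Finset.card_eq_sum_card_fiberwise (fun i _ => Finset.mem_univ (z i))]
  simp

lemma tend_factor (c : ℝ) (j : ℝ) :
    Tendsto (fun a : ℝ => (c*a + j) / a) atTop (𝓝 c) := by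
  have h1 : Tendsto (fun a : ℝ => c + j * a⁻¹) atTop (𝓝 (c + j * 0)) :=
    tendsto_const_nhds.add (tendsto_const_nhds.mul tendsto_inv_atTop_zero)
  rw [mul_zero, add_zero] at h1
  refine h1.congr' ?_
  filter_upwards [eventually_gt_atTop 0] with a ha
  field_simp

lemma tend_ratio (K U n : ℕ) (hU : 1 ≤ U) (m : Fin K → ℕ) (hm : ∑ k, m k = n) :
    Tendsto (fun a : ℝ => (∏ k : Fin K, ∏ j ∈ Finset.range (m k), (a + (j:ℝ))) /
      ∏ j ∈ Finset.range n, ((U:ℝ)*a + (j:ℝ))) atTop (𝓝 (1/(U:ℝ)^n)) := by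
  have hUne : ((U:ℝ))^n ≠ 0 := by
    have : (0:ℝ) < U := by exact_mod_cast hU
    positivity
  have hnum : Tendsto (fun a : ℝ =>
      (∏ k : Fin K, ∏ j ∈ Finset.range (m k), (a + (j:ℝ))) / a^n) atTop (𝓝 1) := by
    have key : ∀ a : ℝ, (∏ k : Fin K, ∏ j ∈ Finset.range (m k), ((a + (j:ℝ)) / a))
        = (∏ k : Fin K, ∏ j ∈ Finset.range (m k), (a + (j:ℝ))) / a^n := by
      intro a
      simp only [Finset.prod_div_distrib, Finset.prod_const, Finset.card_range]
      rw [Finset.prod_pow_eq_pow_sum, hm]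
    have h2 : Tendsto (fun a : ℝ =>
        ∏ k : Fin K, ∏ j ∈ Finset.range (m k), ((a + (j:ℝ)) / a)) atTop
        (𝓝 (∏ k : Fin K, ∏ j ∈ Finset.range (m k), (1:ℝ))) := by
      refine tendsto_finset_prod _ fun k _ => tendsto_finset_prod _ fun j _ => ?_
      simpa using tend_factor 1 (j:ℝ)
    simp only [key] at h2
    simpa using h2
  have hden : Tendsto (fun a : ℝ =>
      (∏ j ∈ Finset.range n, ((U:ℝ)*a + (j:ℝ))) / a^n) atTop (𝓝 ((U:ℝ)^n)) := by
    have key : ∀ a : ℝ, (∏ j ∈ Finset.range n, (((U:ℝ)*a + (j:ℝ)) / a))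
        = (∏ j ∈ Finset.range n, ((U:ℝ)*a + (j:ℝ))) / a^n := by
      intro a
      simp [Finset.prod_div_distrib]
    have h2 : Tendsto (fun a : ℝ =>
        ∏ j ∈ Finset.range n, (((U:ℝ)*a + (j:ℝ)) / a)) atTop
        (𝓝 (∏ _j ∈ Finset.range n, (U:ℝ))) :=
      tendsto_finset_prod _ fun j _ => tend_factor (U:ℝ) (j:ℝ)
    simp only [key] at h2
    simpa using h2
  have hdiv := hnum.div hden hUne
  refine hdiv.congr' ?_
  filter_upwards [eventually_gt_atTop 0] with a ha
  exact div_div_cancel_aux _ _ _ (by positivity)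

lemma gammaRatio (x : ℝ) (hx : 0 < x) (m : ℕ) :
    Real.Gamma (x + m) = Real.Gamma x * ∏ j ∈ Finset.range m, (x + j) := by
  induction m with
  | zero => simp
  | succ m ih =>
    have hxm : x + (m:ℝ) ≠ 0 := by positivity
    have : x + ((m+1 : ℕ) : ℝ) = (x + m) + 1 := by push_cast; ring
    rw [this, Real.Gamma_add_one hxm, ih, Finset.prod_range_succ]
    ring

lemma pz_eq (K U n : ℕ) (hU1 : 1 ≤ U) (hUK : U ≤ K) (α₁ α₂ : ℝ)
    (h1 : 0 < α₁) (h2 : 0 < α₂) (z : Fin n → Fin K) :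
    pz K U n α₁ α₂ z =
      (∏ k : Fin K, ∏ j ∈ Finset.range (nk z k),
        ((if (k : ℕ) < U then α₁ else α₂) + (j:ℝ))) /
      ∏ j ∈ Finset.range n, ((U:ℝ) * α₁ + ((K:ℝ) - (U:ℝ)) * α₂ + (j:ℝ)) := by
  have hU0 : (0:ℝ) < U := by exact_mod_cast hU1
  have hKU : (0:ℝ) ≤ (K:ℝ) - U := by
    have : (U:ℝ) ≤ K := by exact_mod_cast hUK
    linarith
  have hA : 0 < (U:ℝ) * α₁ + ((K:ℝ) - (U:ℝ)) * α₂ := by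
    have := mul_nonneg hKU h2.le
    nlinarith
  set A := (U:ℝ) * α₁ + ((K:ℝ) - (U:ℝ)) * α₂ with hAdef
  have hGA : Real.Gamma A ≠ 0 := (Real.Gamma_pos_of_pos hA).ne'
  have hP : (0:ℝ) < ∏ j ∈ Finset.range n, (A + (j:ℝ)) := by
    apply Finset.prod_pos; intro j _; positivity
  have hprod : (∏ k : Fin K,
      Real.Gamma ((if (k : ℕ) < U then α₁ else α₂) + (nk z k : ℝ)) /
        Real.Gamma (if (k : ℕ) < U then α₁ else α₂)) =
      ∏ k : Fin K, ∏ j ∈ Finset.range (nk z k),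
        ((if (k : ℕ) < U then α₁ else α₂) + (j:ℝ)) := by
    refine Finset.prod_congr rfl fun k _ => ?_
    have hc : (0:ℝ) < (if (k : ℕ) < U then α₁ else α₂) := by split_ifs <;> assumption
    rw [gammaRatio _ hc, mul_comm, mul_div_assoc,
      div_self (Real.Gamma_pos_of_pos hc).ne', mul_one]
  rw [pz, hprod, gammaRatio A hA n]
  rw [div_mul_eq_mul_div, mul_comm]
  rw [eq_div_iff hP.ne']
  field_simp
  ring

/-- The limiting function as `α₂ → 0⁺`. -/
noncomputable def Mfun (K U n : ℕ) (α₁ : ℝ) : ℝ :=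
  ∑ z ∈ Finset.univ.filter (fun z : Fin n → Fin K => Kplus z = U),
    (∏ k : Fin K, ∏ j ∈ Finset.range (nk z k),
      ((if (k : ℕ) < U then α₁ else (0:ℝ)) + (j:ℝ))) /
    ∏ j ∈ Finset.range n, ((U:ℝ) * α₁ + ((K:ℝ) - (U:ℝ)) * 0 + (j:ℝ))

lemma part1 (K U n : ℕ) (hU1 : 1 ≤ U) (hUK : U ≤ K) (α₁ : ℝ) (h1 : 0 < α₁) :
    Tendsto (fun α₂ : ℝ => prKplus K U n α₁ α₂ U) (𝓝[>] 0) (𝓝 (Mfun K U n α₁)) := by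
  have hU0 : (0:ℝ) < U := by exact_mod_cast hU1
  have key : Tendsto (fun α₂ : ℝ =>
      ∑ z ∈ Finset.univ.filter (fun z : Fin n → Fin K => Kplus z = U),
        (∏ k : Fin K, ∏ j ∈ Finset.range (nk z k),
          ((if (k : ℕ) < U then α₁ else α₂) + (j:ℝ))) /
        ∏ j ∈ Finset.range n, ((U:ℝ) * α₁ + ((K:ℝ) - (U:ℝ)) * α₂ + (j:ℝ)))
      (𝓝[>] 0) (𝓝 (Mfun K U n α₁)) := by
    rw [Mfun]
    refine tendsto_finset_sum _ fun z _ => ?_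
    have hnum : ContinuousAt (fun α₂ : ℝ => ∏ k : Fin K, ∏ j ∈ Finset.range (nk z k),
        ((if (k : ℕ) < U then α₁ else α₂) + (j:ℝ))) 0 := by
      apply Continuous.continuousAt
      apply continuous_finset_prod
      intro k _
      apply continuous_finset_prod
      intro j _
      split_ifs <;> fun_prop
    have hden : ContinuousAt (fun α₂ : ℝ => ∏ j ∈ Finset.range n,
        ((U:ℝ) * α₁ + ((K:ℝ) - (U:ℝ)) * α₂ + (j:ℝ))) 0 := by
      apply Continuous.continuousAt
      apply continuous_finset_prod
      intro j _
      fun_prop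
    have hne : (∏ j ∈ Finset.range n,
        ((U:ℝ) * α₁ + ((K:ℝ) - (U:ℝ)) * 0 + (j:ℝ))) ≠ 0 := by
      apply ne_of_gt
      apply Finset.prod_pos
      intro j _
      have : (0:ℝ) ≤ (j:ℝ) := Nat.cast_nonneg j
      nlinarith
    exact ((hnum.div hden hne)).tendsto.mono_left nhdsWithin_le_nhds
  refine Tendsto.congr' ?_ key
  filter_upwards [self_mem_nhdsWithin] with α₂ hα₂
  rw [prKplus]
  exact Finset.sum_congr rfl fun z _ => (pz_eq K U n hU1 hUK α₁ α₂ h1 hα₂ z).symm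

lemma count_lemma (K U n : ℕ) (hUK : U ≤ K) :
    (Finset.univ.filter (fun z : Fin n → Fin K =>
      Kplus z = U ∧ ∀ i, (z i : ℕ) < U)).card = surjCount n U := by
  rw [surjCount, Nat.card_eq_fintype_card, Fintype.card_subtype]
  refine Finset.card_bij' (fun z hz => fun i => ⟨(z i : ℕ), by
      simp only [Finset.mem_filter] at hz; exact hz.2.2 i⟩)
    (fun f hf => fun i => Fin.castLE hUK (f i)) ?_ ?_ ?_ ?_
  · intro z hz
    simp only [Finset.mem_filter, Finset.mem_univ, true_and] at hz ⊢
    obtain ⟨hKp, hlt⟩ := hz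
    set f : Fin n → Fin U := fun i => ⟨(z i : ℕ), hlt i⟩ with hf
    have hcomp : z = (Fin.castLE hUK) ∘ f := by funext i; rfl
    have hcard : (Finset.univ.image f).card = U := by
      have himg : (Finset.univ.image z) = (Finset.univ.image f).image (Fin.castLE hUK) := by
        rw [hcomp, Finset.image_image]
      rw [Kplus, himg, Finset.card_image_of_injective _ (Fin.castLE_injective hUK)] at hKp
      exact hKp
    have huniv : (Finset.univ.image f) = Finset.univ := by
      apply Finset.eq_univ_of_card
      simpa using hcard
    intro y
    have hy : y ∈ Finset.univ.image f := huniv ▸ Finset.mem_univ y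
    obtain ⟨i, _, hi⟩ := Finset.mem_image.mp hy
    exact ⟨i, hi⟩
  · intro f hf
    simp only [Finset.mem_filter, Finset.mem_univ, true_and] at hf ⊢
    constructor
    · have himg : Finset.univ.image f = Finset.univ :=
        Finset.image_univ_of_surjective hf
      rw [Kplus, show (fun i => Fin.castLE hUK (f i)) = (Fin.castLE hUK) ∘ f from rfl,
        ← Finset.image_image, himg,
        Finset.card_image_of_injective _ (Fin.castLE_injective hUK)]
      simp
    · intro i
      exact (f i).2
  · intro z hz; funext i; exact Fin.ext rfl
  · intro f hf; funext i; exact Fin.ext rfl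

lemma part2 (K U n : ℕ) (hU1 : 1 ≤ U) (hUK : U ≤ K) :
    Tendsto (Mfun K U n) atTop (𝓝 ((surjCount n U : ℝ) / (U : ℝ) ^ n)) := by
  have hU0 : (0:ℝ) < U := by exact_mod_cast hU1
  have hlim : Tendsto (Mfun K U n) atTop
      (𝓝 (∑ z ∈ Finset.univ.filter (fun z : Fin n → Fin K => Kplus z = U),
        (if ∀ i, (z i : ℕ) < U then 1/(U:ℝ)^n else 0))) := by
    unfold Mfun
    refine tendsto_finset_sum _ fun z _ => ?_
    by_cases h : ∀ i, (z i : ℕ) < U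
    · rw [if_pos h]
      have heq : ∀ a : ℝ,
          (∏ k : Fin K, ∏ j ∈ Finset.range (nk z k),
            ((if (k : ℕ) < U then a else (0:ℝ)) + (j:ℝ))) /
          ∏ j ∈ Finset.range n, ((U:ℝ) * a + ((K:ℝ) - (U:ℝ)) * 0 + (j:ℝ)) =
          (∏ k : Fin K, ∏ j ∈ Finset.range (nk z k), (a + (j:ℝ))) /
          ∏ j ∈ Finset.range n, ((U:ℝ) * a + (j:ℝ)) := by
        intro a
        congr 1
        · refine Finset.prod_congr rfl fun k _ => ?_
          by_cases hk : (k : ℕ) < U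
          · simp [hk]
          · have hnk : nk z k = 0 := by
              rw [nk, Finset.card_eq_zero, Finset.filter_eq_empty_iff]
              intro i _
              intro hzi
              exact hk (hzi ▸ h i)
            simp [hnk]
        · refine Finset.prod_congr rfl fun j _ => by ring
      exact (tend_ratio K U n hU1 (nk z) (sum_nk z)).congr fun a => (heq a).symm
    · rw [if_neg h]
      push_neg at h
      obtain ⟨i, hi⟩ := h
      have hzero : ∀ a : ℝ,
          (∏ k : Fin K, ∏ j ∈ Finset.range (nk z k),
            ((if (k : ℕ) < U then a else (0:ℝ)) + (j:ℝ))) /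
          ∏ j ∈ Finset.range n, ((U:ℝ) * a + ((K:ℝ) - (U:ℝ)) * 0 + (j:ℝ)) = 0 := by
        intro a
        have hnkpos : 0 < nk z (z i) := by
          rw [nk, Finset.card_pos]
          exact ⟨i, by simp⟩
        have : (∏ k : Fin K, ∏ j ∈ Finset.range (nk z k),
            ((if (k : ℕ) < U then a else (0:ℝ)) + (j:ℝ))) = 0 := by
          apply Finset.prod_eq_zero (Finset.mem_univ (z i))
          apply Finset.prod_eq_zero (Finset.mem_range.mpr hnkpos)
          simp [Nat.not_lt.mpr hi]
        rw [this, zero_div]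
      exact tendsto_const_nhds.congr fun a => (hzero a).symm
  have hsum : (∑ z ∈ Finset.univ.filter (fun z : Fin n → Fin K => Kplus z = U),
      (if ∀ i, (z i : ℕ) < U then 1/(U:ℝ)^n else 0)) =
      (surjCount n U : ℝ) / (U : ℝ) ^ n := by
    rw [← Finset.sum_filter, Finset.filter_filter, Finset.sum_const, count_lemma K U n hUK]
    rw [nsmul_eq_mul]
    rw [mul_one_div]
  rwa [hsum] at hlim

theorem stmt_2 (K U n : ℕ) (hK : 1 ≤ K) (hU1 : 1 ≤ U) (hUK : U ≤ K)
    (hn : 1 ≤ n) :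
    ∃ M : ℝ → ℝ,
      (∀ α₁ : ℝ, 0 < α₁ →
        Tendsto (fun α₂ : ℝ => prKplus K U n α₁ α₂ U) (𝓝[>] 0) (𝓝 (M α₁))) ∧
      Tendsto M atTop (𝓝 ((surjCount n U : ℝ) / (U : ℝ) ^ n)) := by
  exact ⟨Mfun K U n, fun α₁ h1 => part1 K U n hU1 hUK α₁ h1, part2 K U n hU1 hUK⟩
end

section
/- (Remark 2) Fix K ≥ 2, n ≥ 1 and set U = 1. There exists a function M : ℝ → ℝ such that for every α₂ > 0, Pr(K⁺ = 1 | K, n, α₁, α₂) tends to M α₂ as α₁ → 0⁺, and M α₂ tends to 1 as α₂ → 0⁺. That is, with U = 1 and α₂ fixed at a small value, letting α₁ → 0 drives the model to a single occupied component: lim_{α₂→0⁺} lim_{α₁→0⁺} Pr(K⁺ = 1 | K, n, α₁, α₂) = 1. -/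
open Filter Topology Finset

lemma gamma_ratio (x : ℝ) (hx : 0 < x) (n : ℕ) :
    Real.Gamma (x + n) = Real.Gamma x * ∏ j ∈ Finset.range n, (x + j) := by
  induction n with
  | zero => simp
  | succ m ih =>
    have h : x + ((m + 1 : ℕ) : ℝ) = (x + m) + 1 := by push_cast; ring
    rw [h, Real.Gamma_add_one (by positivity), ih, Finset.prod_range_succ]
    ring

lemma nk_const {n K : ℕ} (k j : Fin K) :
    nk (fun _ : Fin n => k) j = if j = k then n else 0 := by
  rcases eq_or_ne j k with h | h
  · subst h; simp [nk]
  · simp [nk, h, h.symm]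

lemma kplus_one_filter (K n : ℕ) (hn : 1 ≤ n) :
    Finset.univ.filter (fun z : Fin n → Fin K => Kplus z = 1) =
      Finset.univ.image (fun k : Fin K => fun _ : Fin n => k) := by
  ext z
  simp only [Finset.mem_filter, Finset.mem_univ, true_and, Finset.mem_image]
  constructor
  · intro h
    obtain ⟨a, ha⟩ := Finset.card_eq_one.mp h
    refine ⟨a, ?_⟩
    funext i
    have hm : z i ∈ Finset.univ.image z := Finset.mem_image_of_mem z (Finset.mem_univ i)
    rw [ha] at hm
    exact (Finset.mem_singleton.mp hm).symm
  · rintro ⟨k, rfl⟩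
    have hne : (Finset.univ : Finset (Fin n)).Nonempty := ⟨⟨0, hn⟩, Finset.mem_univ _⟩
    simp [Kplus, Finset.image_const hne]

lemma pz_const (K n : ℕ) (α₁ α₂ : ℝ) (h₁ : 0 < α₁) (h₂ : 0 < α₂) (k : Fin K) :
    pz K 1 n α₁ α₂ (fun _ => k) =
      Real.Gamma (α₁ + ((K : ℝ) - 1) * α₂) /
          Real.Gamma (α₁ + ((K : ℝ) - 1) * α₂ + n) *
        (Real.Gamma ((if (k : ℕ) < 1 then α₁ else α₂) + n) /
          Real.Gamma (if (k : ℕ) < 1 then α₁ else α₂)) := by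
  unfold pz
  have h1 : ((1 : ℕ) : ℝ) * α₁ + ((K : ℝ) - ((1:ℕ) : ℝ)) * α₂ = α₁ + ((K : ℝ) - 1) * α₂ := by
    push_cast; ring
  rw [h1]
  congr 1
  rw [Finset.prod_eq_single k]
  · rw [nk_const]; simp
  · intro j _ hj; rw [nk_const, if_neg hj]
    push_cast
    rw [add_zero, div_self]
    split_ifs
    · exact (Real.Gamma_pos_of_pos h₁).ne'
    · exact (Real.Gamma_pos_of_pos h₂).ne'
  · simp

lemma prKplus_eq (K n : ℕ) (hK : 2 ≤ K) (hn : 1 ≤ n) (α₁ α₂ : ℝ)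
    (h₁ : 0 < α₁) (h₂ : 0 < α₂) :
    prKplus K 1 n α₁ α₂ 1 =
      Real.Gamma (α₁ + ((K : ℝ) - 1) * α₂) /
          Real.Gamma (α₁ + ((K : ℝ) - 1) * α₂ + n) *
        (Real.Gamma (α₁ + n) / Real.Gamma α₁ +
          ((K : ℝ) - 1) * (Real.Gamma (α₂ + n) / Real.Gamma α₂)) := by
  unfold prKplus
  rw [kplus_one_filter K n hn,
    Finset.sum_image (fun a _ b _ h => congrFun h ⟨0, hn⟩)]
  simp_rw [pz_const K n α₁ α₂ h₁ h₂]
  rw [← Finset.mul_sum]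
  congr 1
  have hsplit : ∀ i : Fin K,
      Real.Gamma ((if (i : ℕ) < 1 then α₁ else α₂) + n) /
          Real.Gamma (if (i : ℕ) < 1 then α₁ else α₂) =
        if (i : ℕ) < 1 then Real.Gamma (α₁ + n) / Real.Gamma α₁
        else Real.Gamma (α₂ + n) / Real.Gamma α₂ := by
    intro i; split_ifs <;> rfl
  simp_rw [hsplit]
  rw [Finset.sum_ite]
  have h0 : Finset.univ.filter (fun k : Fin K => (k : ℕ) < 1) = {⟨0, by omega⟩} := by
    ext k
    simp [Nat.lt_one_iff, Fin.ext_iff]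
  have h1 : (Finset.univ.filter (fun k : Fin K => ¬ (k : ℕ) < 1)).card = K - 1 := by
    have := Finset.card_filter_add_card_filter_not
      (s := (Finset.univ : Finset (Fin K))) (p := fun k : Fin K => (k : ℕ) < 1)
    rw [h0, Finset.card_singleton, Finset.card_univ, Fintype.card_fin] at this
    omega
  rw [Finset.sum_const, Finset.sum_const, h0, h1]
  have : ((K - 1 : ℕ) : ℝ) = (K : ℝ) - 1 := by
    have : (1:ℕ) ≤ K := by omega
    push_cast [this]; ring
  simp only [Finset.sum_singleton, nsmul_eq_mul, this, Finset.card_singleton, Nat.cast_one, one_mul]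


lemma gammaContAt {s : ℝ} (hs : 0 < s) : ContinuousAt Real.Gamma s := by
  refine (Real.differentiableAt_Gamma ?_).continuousAt
  intro k h
  have : (0:ℝ) ≤ (k:ℝ) := Nat.cast_nonneg k
  rw [h] at hs; linarith

theorem stmt_8 (K n : ℕ) (hK : 2 ≤ K) (hn : 1 ≤ n) :
    ∃ M : ℝ → ℝ,
      (∀ α₂ : ℝ, 0 < α₂ →
        Tendsto (fun α₁ : ℝ => prKplus K 1 n α₁ α₂ 1) (𝓝[>] 0) (𝓝 (M α₂))) ∧
      Tendsto M (𝓝[>] 0) (𝓝 1) := by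
  set c : ℝ := (K : ℝ) - 1 with hc
  have hc0 : 0 < c := by
    have : (2:ℝ) ≤ (K:ℝ) := by exact_mod_cast hK
    rw [hc]; linarith
  set m := n - 1 with hm
  have hnm : n = m + 1 := by omega
  set P : ℝ → ℝ := fun x => ∏ j ∈ Finset.range m, (x + (j:ℝ) + 1) with hP
  set Q : ℝ → ℝ := fun x => ∏ j ∈ Finset.range m, (c * x + (j:ℝ) + 1) with hQ
  have hQpos : ∀ x : ℝ, 0 ≤ x → 0 < Q x := fun x hx =>
    Finset.prod_pos (fun j _ => by have := hc0; positivity)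
  have hPcont : Continuous P :=
    continuous_finset_prod _ (fun j _ =>
      (continuous_id.add continuous_const).add continuous_const)
  have hQcont : Continuous Q :=
    continuous_finset_prod _ (fun j _ =>
      ((continuous_const.mul continuous_id).add continuous_const).add continuous_const)
  refine ⟨fun x => P x / Q x, ?_, ?_⟩
  · intro α₂ hα₂
    have hB : 0 < c * α₂ := mul_pos hc0 hα₂
    set F : ℝ → ℝ := fun α₁ =>
      Real.Gamma (α₁ + c * α₂) / Real.Gamma (α₁ + c * α₂ + n) *
        ((∏ j ∈ Finset.range n, (α₁ + (j:ℝ))) +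
          c * ∏ j ∈ Finset.range n, (α₂ + (j:ℝ))) with hF
    have heq : (fun α₁ => prKplus K 1 n α₁ α₂ 1) =ᶠ[𝓝[>] (0:ℝ)] F := by
      filter_upwards [self_mem_nhdsWithin] with α₁ h₁
      have h₁ : (0:ℝ) < α₁ := h₁
      rw [prKplus_eq K n hK hn α₁ α₂ h₁ hα₂, hF]
      rw [gamma_ratio α₁ h₁ n, gamma_ratio α₂ hα₂ n,
        mul_div_cancel_left₀ _ (Real.Gamma_pos_of_pos h₁).ne',
        mul_div_cancel_left₀ _ (Real.Gamma_pos_of_pos hα₂).ne']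
    have hcont : ContinuousAt F 0 := by
      have c0 : ContinuousAt (fun α₁ : ℝ => α₁ + c * α₂) 0 :=
        (continuous_id.add continuous_const).continuousAt
      have c0' : ContinuousAt (fun α₁ : ℝ => α₁ + c * α₂ + n) 0 :=
        ((continuous_id.add continuous_const).add continuous_const).continuousAt
      have c1 : ContinuousAt (fun α₁ : ℝ => Real.Gamma (α₁ + c * α₂)) 0 :=
        ContinuousAt.comp (g := Real.Gamma) (f := fun α₁ : ℝ => α₁ + c * α₂)
          (gammaContAt (by positivity : (0:ℝ) < 0 + c * α₂)) c0
      have c2 : ContinuousAt (fun α₁ : ℝ => Real.Gamma (α₁ + c * α₂ + n)) 0 :=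
        ContinuousAt.comp
          (g := Real.Gamma) (f := fun α₁ : ℝ => α₁ + c * α₂ + n)
          (gammaContAt (by positivity : (0:ℝ) < 0 + c * α₂ + n)) c0'
      have c3 : Continuous fun α₁ : ℝ => ∏ j ∈ Finset.range n, (α₁ + (j:ℝ)) :=
        continuous_finset_prod _ (fun j _ => continuous_id.add continuous_const)
      have hne : Real.Gamma ((0:ℝ) + c * α₂ + n) ≠ 0 := by
        have : (0:ℝ) < (0:ℝ) + c * α₂ + n := by positivity
        exact (Real.Gamma_pos_of_pos this).ne'
      exact (c1.div c2 hne).mul (c3.continuousAt.add continuousAt_const)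
    have htend : Tendsto F (𝓝[>] (0:ℝ)) (𝓝 (F 0)) :=
      hcont.tendsto.mono_left nhdsWithin_le_nhds
    have hz : (∏ j ∈ Finset.range n, ((j:ℕ):ℝ)) = 0 :=
      Finset.prod_eq_zero (Finset.mem_range.mpr (by omega : 0 < n)) (by norm_num)
    have hsplit2 : (∏ j ∈ Finset.range n, (α₂ + (j:ℝ))) = P α₂ * α₂ := by
      rw [hnm, Finset.prod_range_succ']
      simp only [hP]
      congr 1
      · exact Finset.prod_congr rfl (fun j _ => by push_cast; ring)
      · norm_num
    have hsplit3 : (∏ j ∈ Finset.range n, (c * α₂ + (j:ℝ))) = Q α₂ * (c * α₂) := by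
      rw [hnm, Finset.prod_range_succ']
      simp only [hQ]
      congr 1
      · exact Finset.prod_congr rfl (fun j _ => by push_cast; ring)
      · norm_num
    have hval : F 0 = P α₂ / Q α₂ := by
      simp only [hF, zero_add]
      rw [hz, gamma_ratio _ hB n, hsplit2, hsplit3]
      have hΓ : Real.Gamma (c * α₂) ≠ 0 := (Real.Gamma_pos_of_pos hB).ne'
      have hQn : Q α₂ ≠ 0 := (hQpos α₂ hα₂.le).ne'
      field_simp
      ring
    have := Filter.Tendsto.congr' heq.symm htend
    rw [hval] at this
    exact this
  · have hQ0 : Q 0 ≠ 0 := (hQpos 0 le_rfl).ne'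
    have hPQ : P 0 = Q 0 := by simp [hP, hQ]
    have hcont : ContinuousAt (fun x => P x / Q x) 0 :=
      hPcont.continuousAt.div hQcont.continuousAt hQ0
    have h1 : P 0 / Q 0 = 1 := by rw [hPQ, div_self hQ0]
    have := hcont.tendsto.mono_left (nhdsWithin_le_nhds (s := Set.Ioi (0:ℝ)))
    rw [h1] at this
    exact this
end
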